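/- Let r be a natural number, s : {1,…,r} → ℂ, and let z be a complex number that is not an integer. Then the family indexed by functions m : {1,…,r} → ℕ given by m ↦ ( ∏_{j=1}^{r} s_j^{m_j} / m_j! ) · Γ( z − Σ_{j=1}^{r} j·m_j ) is absolutely summable. -/

import Mathlib

set_option maxHeartbeats 1000000

/-- Summability of a finite product of summable nonnegative families over a pi type. -/
lemma summable_pi_prod : ∀ (r : ℕ) (g : Fin r → ℕ → ℝ),
    (∀ j n, 0 ≤ g j n) → (∀ j, Summable (g j)) →
    Summable (fun m : Fin r → ℕ => ∏ j, g j (m j)) := by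
  intro r
  induction r with
  | zero =>
    intro g _ _
    simpa using (summable_of_finite_support (Set.toFinite _))
  | succ r ih =>
    intro g hg hgs
    have h2 : Summable (fun m : Fin r → ℕ => ∏ j, g j.succ (m j)) :=
      ih _ (fun j n => hg _ _) (fun j => hgs _)
    have h1 : Summable (fun p : ℕ × (Fin r → ℕ) => g 0 p.1 * ∏ j, g j.succ (p.2 j)) := by
      apply Summable.mul_of_nonneg (hgs 0) h2 (fun n => hg 0 n)
        (fun m => Finset.prod_nonneg fun j _ => hg _ _)
    rw [← (Fin.consEquiv (fun _ : Fin (r + 1) => ℕ)).summable_iff]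
    refine h1.congr fun p => ?_
    show (g 0 p.1 * ∏ j, g j.succ (p.2 j))
      = ∏ j, g j (Fin.cons (α := fun _ => ℕ) p.1 p.2 j)
    rw [Fin.prod_univ_succ]
    simp

/-- The Gamma function is bounded along `z - n` for non-integer `z`. -/
lemma gamma_shift_bounded (z : ℂ) (hz : ∀ m : ℤ, z ≠ (m : ℂ)) :
    ∃ C : ℝ, ∀ n : ℕ, ‖Complex.Gamma (z - n)‖ ≤ C := by
  set f : ℕ → ℝ := fun n => ‖Complex.Gamma (z - n)‖ with hf
  set N : ℕ := ⌈‖z‖⌉₊ with hN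
  have key : ∀ n : ℕ, N ≤ n → f (n + 1) ≤ f n := by
    intro n hn
    have hw : (z - (n + 1) : ℂ) ≠ 0 := by
      intro h
      apply hz (n + 1)
      push_cast
      exact sub_eq_zero.mp h
    have hrec : Complex.Gamma (z - n) = (z - (n + 1)) * Complex.Gamma (z - (n + 1)) := by
      have := Complex.Gamma_add_one (z - (n + 1)) hw
      rw [← this]; ring_nf
    have hnorm : ‖(z - (n + 1) : ℂ)‖ ≥ 1 := by
      have h1 : (‖z‖ : ℝ) ≤ N := Nat.le_ceil _
      have h2 : ‖((n : ℂ) + 1)‖ = (n : ℝ) + 1 := by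
        rw [show ((n : ℂ) + 1) = ((n + 1 : ℕ) : ℂ) by push_cast; ring,
          Complex.norm_natCast]
        push_cast; ring
      have h3 := norm_sub_norm_le ((n : ℂ) + 1) z
      rw [norm_sub_rev]
      rw [h2] at h3
      have : (N : ℝ) ≤ n := by exact_mod_cast hn
      linarith
    have : f n = ‖(z - (n + 1) : ℂ)‖ * f (n + 1) := by
      simp only [hf]
      rw [hrec, norm_mul]
      push_cast
      ring_nf
    nlinarith [norm_nonneg (Complex.Gamma (z - (n + 1 : ℕ)))]
  have key2 : ∀ k : ℕ, f (N + k) ≤ f N := by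
    intro k
    induction k with
    | zero => simp
    | succ k ihk => exact le_trans (key (N + k) (Nat.le_add_right _ _)) ihk
  refine ⟨(Finset.range (N + 1)).sup' ⟨0, by simp⟩ f, fun n => ?_⟩
  rcases le_or_gt n N with h | h
  · exact Finset.le_sup' f (Finset.mem_range.mpr (Nat.lt_succ_of_le h))
  · obtain ⟨k, rfl⟩ := Nat.exists_eq_add_of_le h.le
    exact le_trans (key2 k)
      (Finset.le_sup' f (Finset.mem_range.mpr (Nat.lt_succ_of_le le_rfl)))

/-- Absolute summability of the multi-parameter Gamma series
`Σ_m (∏_j s_j^{m_j}/m_j!) Γ(z − Σ_j j·m_j)` for non-integer `z`. -/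
theorem stmt13 (r : ℕ) (s : Fin r → ℂ) (z : ℂ) (hz : ∀ m : ℤ, z ≠ (m : ℂ)) :
    Summable (fun m : Fin r → ℕ =>
      (∏ j, s j ^ m j / ((m j).factorial : ℂ)) *
        Complex.Gamma (z - ((∑ j, (j.val + 1) * m j : ℕ) : ℂ))) := by
  obtain ⟨C, hC⟩ := gamma_shift_bounded z hz
  have hC0 : 0 ≤ C := le_trans (norm_nonneg _) (hC 0)
  have hg : Summable (fun m : Fin r → ℕ => (∏ j, ‖s j‖ ^ m j / ((m j).factorial : ℝ))) :=
    summable_pi_prod r (fun j n => ‖s j‖ ^ n / n.factorial)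
      (fun j n => div_nonneg (pow_nonneg (norm_nonneg _) _) (by positivity))
      (fun j => Real.summable_pow_div_factorial ‖s j‖)
  refine Summable.of_norm_bounded (hg.mul_right C) ?_
  intro m
  rw [norm_mul]
  have h1 : ‖∏ j, s j ^ m j / ((m j).factorial : ℂ)‖
      = ∏ j, ‖s j‖ ^ m j / ((m j).factorial : ℝ) := by
    rw [norm_prod]
    refine Finset.prod_congr rfl fun j _ => ?_
    rw [norm_div, norm_pow]
    simp [Complex.norm_natCast]
  rw [h1]
  exact mul_le_mul_of_nonneg_left (hC _)
    (Finset.prod_nonneg fun j _ => div_nonneg (pow_nonneg (norm_nonneg _) _) (by positivity))
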